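/- Let Σ be a positive semidefinite real T×T matrix with canonical Cholesky factor L. For every i with 1 ≤ i ≤ T, the leading principal i×i submatrix L_i of L (the restriction of L to its first i rows and columns) is the canonical Cholesky factor of the leading principal i×i submatrix of Σ; in particular L_i L_iᵀ equals the leading principal i×i submatrix of Σ. -/

import Mathlib

open Matrix

/-- `L` is the canonical Cholesky factor of `S`: it is lower triangular with nonnegative
diagonal entries, `L * Lᵀ = S`, the number of strictly positive diagonal entries of `L`
equals `rank S`, and every column of `L` whose diagonal entry is zero is entirely zero. -/
def IsCanonicalCholesky {T : ℕ} (S L : Matrix (Fin T) (Fin T) ℝ) : Prop :=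
  (∀ i j : Fin T, i < j → L i j = 0) ∧
  (∀ i : Fin T, 0 ≤ L i i) ∧
  L * Lᵀ = S ∧
  (Finset.univ.filter fun i : Fin T => 0 < L i i).card = S.rank ∧
  (∀ j : Fin T, L j j = 0 → ∀ i : Fin T, L i j = 0)

lemma rank_lower_tri {n : ℕ} (M : Matrix (Fin n) (Fin n) ℝ)
    (hlt : ∀ a b : Fin n, a < b → M a b = 0)
    (hz : ∀ j : Fin n, M j j = 0 → ∀ a : Fin n, M a j = 0) :
    M.rank = (Finset.univ.filter fun j : Fin n => M j j ≠ 0).card := by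
  classical
  set s := (Finset.univ.filter fun j : Fin n => M j j ≠ 0) with hs
  have hspan : Submodule.span ℝ (Set.range Mᵀ) =
      Submodule.span ℝ (Set.range fun j : s => Mᵀ (j : Fin n)) := by
    apply le_antisymm
    · rw [Submodule.span_le]
      rintro _ ⟨j, rfl⟩
      by_cases h : M j j = 0
      · have hzero : Mᵀ j = 0 := funext fun a => hz j h a
        rw [hzero]; exact Submodule.zero_mem _
      · exact Submodule.subset_span ⟨⟨j, by simp [hs, h]⟩, rfl⟩
    · rw [Submodule.span_le]
      rintro _ ⟨j, rfl⟩
      exact Submodule.subset_span ⟨(j : Fin n), rfl⟩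
  have hli : LinearIndependent ℝ (fun j : s => Mᵀ (j : Fin n)) := by
    rw [linearIndependent_iff']
    intro t g hsum j hj
    by_contra hg
    set u := t.filter (fun k => g k ≠ 0) with hu
    have hune : u.Nonempty := ⟨j, by simp [hu, hj, hg]⟩
    set m := u.min' hune with hm
    have hmu : m ∈ u := u.min'_mem hune
    have hmt : m ∈ t := (Finset.mem_filter.mp hmu).1
    have hmg : g m ≠ 0 := (Finset.mem_filter.mp hmu).2
    have hcoord := congrFun hsum (m : Fin n)
    rw [Finset.sum_apply] at hcoord
    have key : ∀ k ∈ t, k ≠ m → (g k • Mᵀ (k : Fin n)) (m : Fin n) = 0 := by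
      intro k hk hkm
      by_cases hgk : g k = 0
      · simp [hgk]
      · have hku : k ∈ u := Finset.mem_filter.mpr ⟨hk, hgk⟩
        have hmk : m ≤ k := u.min'_le k hku
        have hmk' : m < k := lt_of_le_of_ne hmk (Ne.symm hkm)
        have : (m : Fin n) < ((k : s) : Fin n) := hmk'
        simp [Matrix.transpose_apply, hlt _ _ this]
    rw [Finset.sum_eq_single_of_mem m hmt key] at hcoord
    have hMm : M (m : Fin n) (m : Fin n) ≠ 0 := by
      have hm2 : (m : Fin n) ∈ s := m.2
      exact (Finset.mem_filter.mp hm2).2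
    simp only [Pi.smul_apply, Matrix.transpose_apply, smul_eq_mul] at hcoord
    exact hmg (by
      rcases mul_eq_zero.mp hcoord with h | h
      · exact h
      · exact absurd h hMm)
  rw [Matrix.rank_eq_finrank_span_cols]
  change Module.finrank ℝ (Submodule.span ℝ (Set.range Mᵀ)) = s.card
  rw [hspan, finrank_span_eq_card hli,
    Fintype.card_coe]

/-- If `L` is the canonical Cholesky factor of a positive semidefinite matrix `S`, then for
every `1 ≤ i ≤ T` the leading principal `i × i` submatrix of `L` is the canonical Cholesky
factor of the leading principal `i × i` submatrix of `S`; in particular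
`L_i * L_iᵀ` equals the leading principal `i × i` submatrix of `S`. -/
theorem canonical_cholesky_leading_principal (T : ℕ) (S L : Matrix (Fin T) (Fin T) ℝ)
    (hS : S.PosSemidef) (hL : IsCanonicalCholesky S L)
    (i : ℕ) (hi1 : 1 ≤ i) (hi2 : i ≤ T) :
    IsCanonicalCholesky (S.submatrix (Fin.castLE hi2) (Fin.castLE hi2))
        (L.submatrix (Fin.castLE hi2) (Fin.castLE hi2)) ∧
      L.submatrix (Fin.castLE hi2) (Fin.castLE hi2) *
          (L.submatrix (Fin.castLE hi2) (Fin.castLE hi2))ᵀ =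
        S.submatrix (Fin.castLE hi2) (Fin.castLE hi2) := by
  classical
  obtain ⟨h1, h2, h3, h4, h5⟩ := hL
  set e : Fin i → Fin T := Fin.castLE hi2 with he
  have hemono : ∀ a b : Fin i, a < b → e a < e b := by
    intro a b hab
    exact hab
  set Li := L.submatrix e e with hLi
  set Si := S.submatrix e e with hSi
  -- the product identity
  have hprod : Li * Liᵀ = Si := by
    ext a b
    have hSab : Si a b = ∑ k : Fin T, L (e a) k * L (e b) k := by
      rw [hSi, Matrix.submatrix_apply, ← h3]
      simp [Matrix.mul_apply]
    have hinj : Function.Injective e := Fin.castLE_injective hi2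
    have hsub : ∑ k : Fin T, L (e a) k * L (e b) k
        = ∑ k ∈ Finset.univ.map ⟨e, hinj⟩, L (e a) k * L (e b) k := by
      symm
      apply Finset.sum_subset (Finset.subset_univ _)
      intro k _ hk
      have hki : ¬ (k : ℕ) < i := by
        intro hlt'
        exact hk (Finset.mem_map.mpr ⟨⟨k, hlt'⟩, Finset.mem_univ _, rfl⟩)
      have : e a < k := by
        have : (a : ℕ) < i := a.2
        exact Fin.lt_def.mpr (lt_of_lt_of_le this (le_of_not_gt hki))
      rw [h1 _ _ this, zero_mul]
    rw [hSab, hsub, Finset.sum_map]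
    simp [hLi, Matrix.mul_apply]
  have hzLi : ∀ j : Fin i, Li j j = 0 → ∀ a : Fin i, Li a j = 0 := by
    intro j hj a
    exact h5 (e j) hj (e a)
  have hltLi : ∀ a b : Fin i, a < b → Li a b = 0 := by
    intro a b hab
    exact h1 (e a) (e b) (hemono a b hab)
  have hrank : (Finset.univ.filter fun j : Fin i => 0 < Li j j).card = Si.rank := by
    have h6 : Si.rank = Li.rank := by
      rw [← hprod]
      exact Matrix.rank_self_mul_transpose Li
    rw [h6, rank_lower_tri Li hltLi hzLi]
    congr 1
    apply Finset.filter_congr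
    intro j _
    have := h2 (e j)
    constructor
    · intro h; exact ne_of_gt h
    · intro h; exact lt_of_le_of_ne this (Ne.symm h)
  refine ⟨⟨hltLi, fun j => h2 (e j), hprod, hrank, hzLi⟩, hprod⟩
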